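/- Let A : ℕ → ℕ be defined by A(0) = 1, A(1) = 2, and A(n) = 1 + C(A(n−2)+1, 2) + A(n−2)·(A(n−1) − A(n−2)) for n ≥ 2, and let φ = (1+√5)/2. Then there exist real constants c > 0 and C > 0 such that for all n ≥ 2, c·φⁿ ≤ log A(n) ≤ C·φⁿ. -/
import Mathlib


def A : ℕ → ℕ
  | 0 => 1
  | 1 => 2
  | n + 2 => 1 + Nat.choose (A n + 1) 2 + A n * (A (n + 1) - A n)

noncomputable def φ : ℝ := (1 + Real.sqrt 5) / 2

lemma two_choose_two (a : ℕ) : 2 * Nat.choose (a + 1) 2 = a * (a + 1) := by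
  induction a with
  | zero => rfl
  | succ a ih =>
    rw [show a + 1 + 1 = (a + 1) + 1 from rfl, Nat.choose_succ_succ (a + 1) 1]
    simp [Nat.choose_one_right, Nat.mul_add, ih]
    ring

lemma A_pos (n : ℕ) : 1 ≤ A n := by
  match n with
  | 0 => exact le_refl 1
  | 1 => exact one_le_two
  | n + 2 => simp only [A]; omega

lemma A_mono (n : ℕ) : A n ≤ A (n + 1) := by
  induction n using Nat.strong_induction_on with
  | _ n ih =>
    match n with
    | 0 => simp [A]
    | 1 => simp [A]
    | n + 2 =>
      have h1 : A n ≤ A (n + 1) := ih n (by omega)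
      have h2 : A (n + 1) ≤ A (n + 2) := ih (n + 1) (by omega)
      have p1 : 1 ≤ A n := A_pos n
      have e2 : 2 * A (n + 2) = 2 + A n * (A n + 1) + 2 * (A n * (A (n + 1) - A n)) := by
        show 2 * (1 + Nat.choose (A n + 1) 2 + A n * (A (n + 1) - A n)) = _
        rw [Nat.mul_add, Nat.mul_add, two_choose_two]
      have e3 : 2 * A (n + 3) = 2 + A (n+1) * (A (n+1) + 1) + 2 * (A (n+1) * (A (n + 2) - A (n+1))) := by
        show 2 * (1 + Nat.choose (A (n+1) + 1) 2 + A (n+1) * (A (n + 2) - A (n+1))) = _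
        rw [Nat.mul_add, Nat.mul_add, two_choose_two]
      obtain ⟨d1, hd1⟩ : ∃ d, A (n + 1) = A n + d := ⟨A (n+1) - A n, by omega⟩
      obtain ⟨d2, hd2⟩ : ∃ d, A (n + 2) = A (n + 1) + d := ⟨A (n+2) - A (n+1), by omega⟩
      have hs1 : A (n + 1) - A n = d1 := by omega
      have hs2 : A (n + 2) - A (n + 1) = d2 := by omega
      rw [hs1] at e2
      rw [hs2] at e3
      show A (n + 2) ≤ A (n + 3)
      have : 2 * A (n + 2) ≤ 2 * A (n + 3) := by
        rw [e2, e3, hd1]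
        nlinarith [p1]
      omega

lemma A_le_A (m n : ℕ) (h : m ≤ n) : A m ≤ A n := by
  induction n with
  | zero => simp [Nat.le_zero.mp h]
  | succ n ih =>
    rcases Nat.lt_or_ge m (n + 1) with h' | h'
    · exact le_trans (ih (by omega)) (A_mono n)
    · have : m = n + 1 := by omega
      simp [this]

lemma A_lower (n : ℕ) : A n * A (n + 1) ≤ 2 * A (n + 2) := by
  have h1 : A n ≤ A (n + 1) := A_mono n
  have p1 : 1 ≤ A n := A_pos n
  have e2 : 2 * A (n + 2) = 2 + A n * (A n + 1) + 2 * (A n * (A (n + 1) - A n)) := by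
    show 2 * (1 + Nat.choose (A n + 1) 2 + A n * (A (n + 1) - A n)) = _
    rw [Nat.mul_add, Nat.mul_add, two_choose_two]
  obtain ⟨d1, hd1⟩ : ∃ d, A (n + 1) = A n + d := ⟨A (n+1) - A n, by omega⟩
  have hs1 : A (n + 1) - A n = d1 := by omega
  rw [hs1] at e2
  rw [e2, hd1]
  nlinarith [p1]

lemma A_upper (n : ℕ) : A (n + 2) ≤ 3 * (A n * A (n + 1)) := by
  have h1 : A n ≤ A (n + 1) := A_mono n
  have p1 : 1 ≤ A n := A_pos n
  have e2 : 2 * A (n + 2) = 2 + A n * (A n + 1) + 2 * (A n * (A (n + 1) - A n)) := by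
    show 2 * (1 + Nat.choose (A n + 1) 2 + A n * (A (n + 1) - A n)) = _
    rw [Nat.mul_add, Nat.mul_add, two_choose_two]
  obtain ⟨d1, hd1⟩ : ∃ d, A (n + 1) = A n + d := ⟨A (n+1) - A n, by omega⟩
  have hs1 : A (n + 1) - A n = d1 := by omega
  rw [hs1] at e2
  have : 2 * A (n + 2) ≤ 2 * (3 * (A n * A (n + 1))) := by
    rw [e2, hd1]
    nlinarith [p1]
  omega

lemma sqrt5_lb : (2.2 : ℝ) ≤ Real.sqrt 5 := by
  rw [show (5 : ℝ) = 2.2 ^ 2 + 0.16 by norm_num]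
  nlinarith [Real.sq_sqrt (show (0:ℝ) ≤ 2.2 ^ 2 + 0.16 by norm_num),
    Real.sqrt_nonneg ((2.2:ℝ) ^ 2 + 0.16)]

lemma sqrt5_ub : Real.sqrt 5 ≤ 2.4 := by
  nlinarith [Real.sq_sqrt (show (0:ℝ) ≤ 5 by norm_num), Real.sqrt_nonneg (5:ℝ)]

lemma phi_pos : 0 < φ := by
  have := sqrt5_lb; unfold φ; linarith

lemma phi_sq : φ ^ 2 = φ + 1 := by
  have h : Real.sqrt 5 ^ 2 = 5 := Real.sq_sqrt (by norm_num)
  unfold φ; nlinarith [h]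

lemma phi_lb : (1.6 : ℝ) ≤ φ := by
  have := sqrt5_lb; unfold φ; linarith

lemma phi_ub : φ ≤ 1.7 := by
  have := sqrt5_ub; unfold φ; linarith

lemma log_lb {x : ℝ} (hx : 0 < x) : 1 - x⁻¹ ≤ Real.log x := by
  have h := Real.log_le_sub_one_of_pos (show (0:ℝ) < x⁻¹ by positivity)
  rw [Real.log_inv] at h
  linarith

lemma log3_ub : Real.log 3 ≤ 1.2 := by
  have h1 : Real.log 3 = Real.log 2 + Real.log (3/2) := by
    rw [← Real.log_mul (by norm_num) (by norm_num)]; norm_num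
  have h2 : Real.log (3/2) ≤ 1/2 := by
    have := Real.log_le_sub_one_of_pos (show (0:ℝ) < 3/2 by norm_num)
    linarith
  have h3 := Real.log_two_lt_d9
  linarith

lemma log2_ub : Real.log 2 ≤ 0.7 := by
  have := Real.log_two_lt_d9; linarith

theorem stmt_13 :
    ∃ c C : ℝ, 0 < c ∧ 0 < C ∧ ∀ n : ℕ, 2 ≤ n →
      c * φ ^ n ≤ Real.log (A n) ∧ Real.log (A n) ≤ C * φ ^ n := by
  have hA2 : A 2 = 3 := rfl
  have hA3 : A 3 = 6 := rfl
  have hApos : ∀ n : ℕ, (0 : ℝ) < (A n : ℝ) := fun n => by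
    exact_mod_cast Nat.lt_of_lt_of_le Nat.zero_lt_one (A_pos n)
  -- recursive log inequalities
  have hrecL : ∀ n : ℕ, Real.log (A n) + Real.log (A (n+1)) - Real.log 2 ≤ Real.log (A (n+2)) := by
    intro n
    have h : (A n : ℝ) * (A (n+1)) ≤ 2 * (A (n+2)) := by exact_mod_cast A_lower n
    have := Real.log_le_log (mul_pos (hApos n) (hApos (n+1))) h
    rw [Real.log_mul (ne_of_gt (hApos n)) (ne_of_gt (hApos (n+1))),
        Real.log_mul (by norm_num) (ne_of_gt (hApos (n+2)))] at this
    linarith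
  have hrecU : ∀ n : ℕ, Real.log (A (n+2)) ≤ Real.log 3 + Real.log (A n) + Real.log (A (n+1)) := by
    intro n
    have h : (A (n+2) : ℝ) ≤ 3 * ((A n) * (A (n+1))) := by exact_mod_cast A_upper n
    have := Real.log_le_log (hApos (n+2)) h
    rw [Real.log_mul (by norm_num) (ne_of_gt (mul_pos (hApos n) (hApos (n+1)))),
        Real.log_mul (ne_of_gt (hApos n)) (ne_of_gt (hApos (n+1)))] at this
    linarith
  refine ⟨1/10, 1, by norm_num, by norm_num, ?_⟩
  -- strengthened statement
  have key : ∀ n : ℕ,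
      ((1/10 : ℝ) * φ ^ (n+2) ≤ Real.log (A (n+2)) - Real.log 2 ∧
        Real.log (A (n+2)) + Real.log 3 ≤ φ ^ (n+2)) ∧
      ((1/10 : ℝ) * φ ^ (n+3) ≤ Real.log (A (n+3)) - Real.log 2 ∧
        Real.log (A (n+3)) + Real.log 3 ≤ φ ^ (n+3)) := by
    intro n
    induction n with
    | zero =>
      have hφ2 : φ ^ 2 = φ + 1 := phi_sq
      have hφ3 : φ ^ 3 = 2 * φ + 1 := by
        have : φ ^ 3 = φ ^ 2 * φ := by ring
        rw [this, hφ2]; nlinarith [phi_sq]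
      have hlb := phi_lb
      have hub := phi_ub
      have hlog32 : (1/3 : ℝ) ≤ Real.log 3 - Real.log 2 := by
        have h := log_lb (show (0:ℝ) < 3/2 by norm_num)
        rw [Real.log_div (by norm_num) (by norm_num)] at h
        norm_num at h ⊢
        linarith
      have hlog3lb : (2/3 : ℝ) ≤ Real.log 3 := by
        have h := log_lb (show (0:ℝ) < 3 by norm_num)
        norm_num at h; linarith
      have h3u := log3_ub
      have h2u := log2_ub
      have h2l : (0:ℝ) < Real.log 2 := Real.log_pos (by norm_num)
      have hlog6 : Real.log 6 = Real.log 2 + Real.log 3 := by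
        rw [← Real.log_mul (by norm_num) (by norm_num)]; norm_num
      constructor
      · constructor
        · rw [hA2, hφ2]
          push_cast
          nlinarith
        · rw [hA2, hφ2]
          push_cast
          nlinarith
      · constructor
        · rw [hA3, hφ3]
          push_cast
          rw [hlog6]
          nlinarith
        · rw [hA3, hφ3]
          push_cast
          rw [hlog6]
          nlinarith
    | succ n ih =>
      obtain ⟨⟨l1, u1⟩, ⟨l2, u2⟩⟩ := ih
      refine ⟨⟨l2, u2⟩, ?_, ?_⟩
      · have hr := hrecL (n + 2)
        have hφ : φ ^ (n + 1 + 3) = φ ^ (n + 2) + φ ^ (n + 3) := by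
          have : φ ^ (n + 1 + 3) = φ ^ (n + 2) * φ ^ 2 := by ring
          rw [this, phi_sq]; ring
        rw [hφ]
        calc (1/10 : ℝ) * (φ ^ (n+2) + φ ^ (n+3))
            = 1/10 * φ ^ (n+2) + 1/10 * φ ^ (n+3) := by ring
          _ ≤ (Real.log (A (n+2)) - Real.log 2) + (Real.log (A (n+3)) - Real.log 2) := by
              linarith
          _ ≤ Real.log (A (n+2+2)) - Real.log 2 := by
              have : A (n + 2 + 1) = A (n + 3) := rfl
              rw [show n + 2 + 2 = n + 4 from rfl] at hr ⊢
              rw [show n + 2 + 1 = n + 3 from rfl] at hr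
              linarith
      · have hr := hrecU (n + 2)
        have hφ : φ ^ (n + 1 + 3) = φ ^ (n + 2) + φ ^ (n + 3) := by
          have : φ ^ (n + 1 + 3) = φ ^ (n + 2) * φ ^ 2 := by ring
          rw [this, phi_sq]; ring
        rw [hφ]
        rw [show n + 2 + 2 = n + 4 from rfl] at hr
        rw [show n + 2 + 1 = n + 3 from rfl] at hr
        have h2l : (0:ℝ) < Real.log 2 := Real.log_pos (by norm_num)
        have h3l : (0:ℝ) < Real.log 3 := Real.log_pos (by norm_num)
        have : Real.log (A (n+1+3)) + Real.log 3 ≤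
            (Real.log (A (n+2)) + Real.log 3) + (Real.log (A (n+3)) + Real.log 3) := by
          rw [show n + 1 + 3 = n + 4 from rfl]
          linarith
        linarith
  intro n hn
  obtain ⟨m, rfl⟩ : ∃ m, n = m + 2 := ⟨n - 2, by omega⟩
  obtain ⟨⟨l, u⟩, _⟩ := key m
  have h2l : (0:ℝ) < Real.log 2 := Real.log_pos (by norm_num)
  have h3l : (0:ℝ) < Real.log 3 := Real.log_pos (by norm_num)
  constructor
  · linarith
  · linarith
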